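/- Let A, M be real J×N matrices, Γ a symmetric positive definite J×J matrix, and B₀ a symmetric positive definite N×N matrix. Define the sequence of precision matrices by B_{ℓ+1} = R(B_ℓ) where R(B) = Aᵀ(Γ + MB⁻¹Mᵀ)⁻¹A + B₀, starting from B₀. Then every B_ℓ is symmetric positive definite and the sequence is non-decreasing in the Loewner order: B_{ℓ+1} ⪰ B_ℓ for all ℓ ≥ 0. -/

import Mathlib

open Matrix

/-- Antitonicity of the inverse in the Loewner order, for real posdef matrices. -/
lemma inv_sub_inv_posSemidef {n : ℕ} {A B : Matrix (Fin n) (Fin n) ℝ}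
    (hA : A.PosDef) (hB : B.PosDef) (h : (A - B).PosSemidef) :
    (B⁻¹ - A⁻¹).PosSemidef := by
  haveI := hA.isUnit.invertible
  haveI := hB.isUnit.invertible
  refine PosSemidef.of_dotProduct_mulVec_nonneg ?_ ?_
  · exact hB.inv.isHermitian.sub hA.inv.isHermitian
  · intro y
    simp only [star_trivial, sub_mulVec, dotProduct_sub]
    set x : Fin n → ℝ := A⁻¹ *ᵥ y with hx
    have hAx : A *ᵥ x = y := by
      rw [hx, mulVec_mulVec, Matrix.mul_inv_of_invertible, one_mulVec]
    have hBy : B *ᵥ (B⁻¹ *ᵥ y) = y := by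
      rw [mulVec_mulVec, Matrix.mul_inv_of_invertible, one_mulVec]
    have hBt : Bᵀ = B := by
      have := hB.isHermitian
      rwa [IsHermitian, conjTranspose_eq_transpose_of_trivial] at this
    have hsym : ∀ u v : Fin n → ℝ, u ⬝ᵥ (B *ᵥ v) = (B *ᵥ u) ⬝ᵥ v := by
      intro u v
      rw [dotProduct_mulVec, ← vecMul_transpose, hBt]
    have h1 : x ⬝ᵥ (B *ᵥ x) ≤ x ⬝ᵥ y := by
      have := h.dotProduct_mulVec_nonneg x
      simp only [star_trivial, sub_mulVec, dotProduct_sub, hAx] at this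
      linarith
    have h2 := hB.posSemidef.dotProduct_mulVec_nonneg (x - B⁻¹ *ᵥ y)
    simp only [star_trivial, mulVec_sub, dotProduct_sub, sub_dotProduct, hBy] at h2
    have e1 : (B⁻¹ *ᵥ y) ⬝ᵥ (B *ᵥ x) = y ⬝ᵥ x := by rw [hsym, hBy]
    have e2 : y ⬝ᵥ x = x ⬝ᵥ y := dotProduct_comm _ _
    have e3 : (B⁻¹ *ᵥ y) ⬝ᵥ y = y ⬝ᵥ (B⁻¹ *ᵥ y) := dotProduct_comm _ _
    have e4 : y ⬝ᵥ (A⁻¹ *ᵥ y) = x ⬝ᵥ y := by rw [← hx, e2]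
    rw [e1] at h2
    linarith [e2, e3, e4]

lemma conj_psd {N J : ℕ} (A : Matrix (Fin J) (Fin N) ℝ) {S : Matrix (Fin J) (Fin J) ℝ}
    (hS : S.PosSemidef) : (Aᵀ * S * A).PosSemidef := by
  have := hS.conjTranspose_mul_mul_same A
  rwa [conjTranspose_eq_transpose_of_trivial] at this

lemma gamma_posdef {N J : ℕ} (M : Matrix (Fin J) (Fin N) ℝ) {Γ : Matrix (Fin J) (Fin J) ℝ}
    (hΓ : Γ.PosDef) {B : Matrix (Fin N) (Fin N) ℝ} (hB : B.PosDef) :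
    (Γ + M * B⁻¹ * Mᵀ).PosDef := by
  have h1 : (M * B⁻¹ * Mᵀ).PosSemidef := by
    have := hB.posSemidef.inv.mul_mul_conjTranspose_same M
    rwa [conjTranspose_eq_transpose_of_trivial] at this
  exact hΓ.add_posSemidef h1

/-- The precision iterates `B₀, B_{ℓ+1} = R(B_ℓ) = Aᵀ(Γ + M B_ℓ⁻¹ Mᵀ)⁻¹A + B₀`. -/
noncomputable def Bseq {N J : ℕ}
    (A M : Matrix (Fin J) (Fin N) ℝ) (Γ : Matrix (Fin J) (Fin J) ℝ)
    (B₀ : Matrix (Fin N) (Fin N) ℝ) : ℕ → Matrix (Fin N) (Fin N) ℝ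
  | 0 => B₀
  | (ℓ + 1) => Aᵀ * (Γ + M * (Bseq A M Γ B₀ ℓ)⁻¹ * Mᵀ)⁻¹ * A + B₀

/-- Each precision iterate `B_ℓ` is symmetric positive definite, and the sequence is
non-decreasing in the Loewner order: `B_{ℓ+1} ⪰ B_ℓ` for all `ℓ ≥ 0`. -/
theorem stmt_11 {N J : ℕ}
    (A M : Matrix (Fin J) (Fin N) ℝ) (Γ : Matrix (Fin J) (Fin J) ℝ)
    (B₀ : Matrix (Fin N) (Fin N) ℝ)
    (hΓ : Γ.PosDef) (hB₀ : B₀.PosDef) :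
    ∀ ℓ : ℕ, (Bseq A M Γ B₀ ℓ).PosDef ∧
      (Bseq A M Γ B₀ (ℓ + 1) - Bseq A M Γ B₀ ℓ).PosSemidef := by
  intro ℓ
  induction ℓ with
  | zero =>
    refine ⟨hB₀, ?_⟩
    have hG := gamma_posdef M hΓ hB₀
    have hc := conj_psd A hG.inv.posSemidef
    have heq : Bseq A M Γ B₀ 1 - Bseq A M Γ B₀ 0
        = Aᵀ * (Γ + M * B₀⁻¹ * Mᵀ)⁻¹ * A := by
      show (Aᵀ * (Γ + M * (Bseq A M Γ B₀ 0)⁻¹ * Mᵀ)⁻¹ * A + B₀) - B₀ = _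
      show (Aᵀ * (Γ + M * B₀⁻¹ * Mᵀ)⁻¹ * A + B₀) - B₀ = _
      rw [add_sub_cancel_right]
    rw [heq]; exact hc
  | succ ℓ ih =>
    obtain ⟨hpd, hmono⟩ := ih
    have hpd1 : (Bseq A M Γ B₀ (ℓ + 1)).PosDef := by
      show (Aᵀ * (Γ + M * (Bseq A M Γ B₀ ℓ)⁻¹ * Mᵀ)⁻¹ * A + B₀).PosDef
      exact Matrix.PosDef.posSemidef_add (conj_psd A (gamma_posdef M hΓ hpd).inv.posSemidef) hB₀
    refine ⟨hpd1, ?_⟩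
    have hinv : ((Bseq A M Γ B₀ ℓ)⁻¹ - (Bseq A M Γ B₀ (ℓ + 1))⁻¹).PosSemidef :=
      inv_sub_inv_posSemidef hpd1 hpd hmono
    have hG1 := gamma_posdef M hΓ hpd
    have hG2 := gamma_posdef M hΓ hpd1
    have hmid : ((Γ + M * (Bseq A M Γ B₀ ℓ)⁻¹ * Mᵀ)
        - (Γ + M * (Bseq A M Γ B₀ (ℓ + 1))⁻¹ * Mᵀ)).PosSemidef := by
      have hmm := hinv.mul_mul_conjTranspose_same M
      rw [conjTranspose_eq_transpose_of_trivial] at hmm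
      have : (Γ + M * (Bseq A M Γ B₀ ℓ)⁻¹ * Mᵀ) - (Γ + M * (Bseq A M Γ B₀ (ℓ + 1))⁻¹ * Mᵀ)
          = M * ((Bseq A M Γ B₀ ℓ)⁻¹ - (Bseq A M Γ B₀ (ℓ + 1))⁻¹) * Mᵀ := by
        rw [Matrix.mul_sub, Matrix.sub_mul, add_sub_add_left_eq_sub]
      rw [this]; exact hmm
    have hinv2 := inv_sub_inv_posSemidef hG1 hG2 hmid
    have hc := conj_psd A hinv2
    have heq : Bseq A M Γ B₀ (ℓ + 2) - Bseq A M Γ B₀ (ℓ + 1)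
        = Aᵀ * ((Γ + M * (Bseq A M Γ B₀ (ℓ + 1))⁻¹ * Mᵀ)⁻¹
            - (Γ + M * (Bseq A M Γ B₀ ℓ)⁻¹ * Mᵀ)⁻¹) * A := by
      show (Aᵀ * (Γ + M * (Bseq A M Γ B₀ (ℓ + 1))⁻¹ * Mᵀ)⁻¹ * A + B₀)
          - (Aᵀ * (Γ + M * (Bseq A M Γ B₀ ℓ)⁻¹ * Mᵀ)⁻¹ * A + B₀) = _
      rw [add_sub_add_right_eq_sub, Matrix.mul_sub, Matrix.sub_mul]
    rw [heq]; exact hc
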